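/- Let Λ ⊂ ℂ be a lattice with basis (ν, λ) where λ = ζ ∈ ℝ>0 and ν = (εζ + iξ)/k for coprime integers ε, k with k > 0 and ξ > 0, and let Λ̃ ⊂ Λ be generated by λ and ℓ·ν for an integer ℓ > 0. Then the smallest positive integer multiple of μ = iξ lying in Λ̃ is (ℓ/gcd(ℓ, k))·μ, and Λ̃ / ⟨λ, (ℓ/gcd(ℓ,k))μ⟩ is cyclic of order k/gcd(ℓ, k). -/

import Mathlib

/-- Covering-space lattice computation from Proposition 3.5: `Λ ⊂ ℂ` has basis
`(ν, λ)` with `λ = ζ` and `ν = (εζ + iξ)/k` (`ε` coprime to `k`), and `Λ̃ ⊂ Λ` is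
generated by `λ` and `ℓ·ν`.  Then the least positive integer `j` with `j·μ ∈ Λ̃`
(where `μ = iξ`) is `ℓ/gcd(ℓ,k)`, and the quotient of `Λ̃` by the subgroup generated
by `λ` and `(ℓ/gcd(ℓ,k))·μ` is cyclic of order `k/gcd(ℓ,k)`. -/
theorem stmt17 (k ℓ : ℕ) (hk : 0 < k) (hl : 0 < ℓ) (ε : ℤ)
    (hε : IsCoprime ε (k : ℤ)) (ξ ζ : ℝ) (hξ : 0 < ξ) (hζ : 0 < ζ)
    (lam ν μ : ℂ) (hlam : lam = (ζ : ℂ))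
    (hν : ν = ((ε : ℂ) * ζ + Complex.I * ξ) / (k : ℂ))
    (hμ : μ = Complex.I * ξ)
    (Lt : AddSubgroup ℂ) (hLt : Lt = AddSubgroup.closure {lam, (ℓ : ℂ) * ν}) :
    IsLeast {j : ℕ | 0 < j ∧ (j : ℂ) * μ ∈ Lt} (ℓ / Nat.gcd ℓ k) ∧
      ∀ L' : AddSubgroup ℂ,
        L' = AddSubgroup.closure {lam, ((ℓ / Nat.gcd ℓ k : ℕ) : ℂ) * μ} →
        L' ≤ Lt ∧ IsAddCyclic (Lt ⧸ L'.addSubgroupOf Lt) ∧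
          Nat.card (Lt ⧸ L'.addSubgroupOf Lt) = k / Nat.gcd ℓ k := by
  subst hlam hν hμ hLt
  set d := Nat.gcd ℓ k with hd
  have hd0 : 0 < d := Nat.gcd_pos_of_pos_left k hl
  set l' := ℓ / d with hl'
  set k' := k / d with hk'
  have hld : d * l' = ℓ := Nat.mul_div_cancel' (Nat.gcd_dvd_left ℓ k)
  have hkd : d * k' = k := Nat.mul_div_cancel' (Nat.gcd_dvd_right ℓ k)
  have cop : Nat.Coprime l' k' := Nat.coprime_div_gcd_div_gcd hd0
  have hl'0 : 0 < l' := Nat.div_pos (Nat.le_of_dvd hl (Nat.gcd_dvd_left ℓ k)) hd0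
  have hk'0 : 0 < k' := Nat.div_pos (Nat.le_of_dvd hk (Nat.gcd_dvd_right ℓ k)) hd0
  have hkC : (k : ℂ) ≠ 0 := Nat.cast_ne_zero.mpr hk.ne'
  have hζC : (ζ : ℂ) ≠ 0 := by exact_mod_cast Complex.ofReal_ne_zero.mpr hζ.ne'
  set ν : ℂ := ((ε : ℂ) * ζ + Complex.I * ξ) / (k : ℂ) with hν
  -- injectivity of the normal form
  have hinj : ∀ p q : ℤ, (p : ℂ) * ζ + Complex.I * ((q : ℂ) * ξ) = 0 → p = 0 ∧ q = 0 := by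
    intro p q h
    have h1 := congrArg Complex.re h
    have h2 := congrArg Complex.im h
    simp at h1 h2
    exact ⟨h1.resolve_right hζ.ne', h2.resolve_right hξ.ne'⟩
  -- membership in Lt
  have memLt : ∀ z : ℂ, z ∈ AddSubgroup.closure {(ζ : ℂ), (ℓ : ℂ) * ν} ↔
      ∃ a b : ℤ, z = (a : ℂ) * ζ + (b : ℂ) * ((ℓ : ℂ) * ν) := by
    intro z
    rw [AddSubgroup.mem_closure_pair]
    constructor
    · rintro ⟨m, n, rfl⟩; exact ⟨m, n, by simp [zsmul_eq_mul]⟩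
    · rintro ⟨a, b, rfl⟩; exact ⟨a, b, by simp [zsmul_eq_mul]⟩
  -- (ℓ/d)·μ ∈ Lt
  have hμmemLt : ((l' : ℕ) : ℂ) * (Complex.I * ξ) ∈
      AddSubgroup.closure {(ζ : ℂ), (ℓ : ℂ) * ν} := by
    rw [memLt]
    refine ⟨-(l' * ε), (k' : ℤ), ?_⟩
    rw [hν]
    field_simp
    push_cast [← hld, ← hkd]
    ring
  -- lower bound: j·μ ∈ Lt → l' ∣ j
  have hlb : ∀ j : ℕ, ((j : ℕ) : ℂ) * (Complex.I * ξ) ∈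
      AddSubgroup.closure {(ζ : ℂ), (ℓ : ℂ) * ν} → l' ∣ j := by
    intro j hj
    rw [memLt] at hj
    obtain ⟨a, b, hab⟩ := hj
    have key : ((a * k + b * ℓ * ε : ℤ) : ℂ) * ζ +
        Complex.I * (((b * ℓ - j * k : ℤ) : ℂ) * ξ) = 0 := by
      rw [hν] at hab
      field_simp at hab
      push_cast
      linear_combination -hab
    obtain ⟨h1, h2⟩ := hinj _ _ key
    have hbl : (b : ℤ) * ℓ = j * k := by linarith [sub_eq_zero.mp (by linarith [h2] : (b * ℓ - j * k : ℤ) = 0)]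
    -- b * (d*l') = j * (d*k')  ⇒  b*l' = j*k'
    have hbl' : (b : ℤ) * l' = j * k' := by
      have hdz : (d : ℤ) ≠ 0 := by exact_mod_cast hd0.ne'
      apply mul_left_cancel₀ hdz
      push_cast [← hld, ← hkd] at hbl ⊢
      linarith
    have : (l' : ℤ) ∣ (j : ℤ) * (k' : ℤ) := ⟨b, by linarith⟩
    have hnat : l' ∣ j * k' := by exact_mod_cast this
    exact (Nat.Coprime.dvd_of_dvd_mul_right cop hnat)
  -- characterization of membership in L'
  have memL' : ∀ a b : ℤ, (a : ℂ) * ζ + (b : ℂ) * ((ℓ : ℂ) * ν) ∈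
      AddSubgroup.closure {(ζ : ℂ), ((l' : ℕ) : ℂ) * (Complex.I * ξ)} ↔ (k' : ℤ) ∣ b := by
    intro a b
    rw [AddSubgroup.mem_closure_pair]
    constructor
    · rintro ⟨m, n, hmn⟩
      simp only [zsmul_eq_mul] at hmn
      have key : ((m * k - a * k - b * ℓ * ε : ℤ) : ℂ) * ζ +
          Complex.I * (((n * l' * k - b * ℓ : ℤ) : ℂ) * ξ) = 0 := by
        rw [hν] at hmn
        field_simp at hmn
        push_cast
        linear_combination hmn
      obtain ⟨h1, h2⟩ := hinj _ _ key
      have h2' : (n : ℤ) * l' * k = b * ℓ := by linarith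
      refine ⟨n, ?_⟩
      have hdl : (d : ℤ) * l' ≠ 0 := by
        push_cast [← hld] at *
        positivity
      apply mul_left_cancel₀ hdl
      push_cast [← hld, ← hkd] at h2' ⊢
      linarith
    · rintro ⟨n, rfl⟩
      refine ⟨a + n * l' * ε, n, ?_⟩
      simp only [zsmul_eq_mul]
      rw [hν]
      field_simp
      push_cast [← hld, ← hkd]
      ring
  -- the ℤ×ℤ parametrization
  set ψ : ℤ × ℤ →+ ℂ := AddMonoidHom.mk'
      (fun p => (p.1 : ℂ) * ζ + (p.2 : ℂ) * ((ℓ : ℂ) * ν))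
      (by intro x y; simp only [Prod.fst_add, Prod.snd_add]; push_cast; ring) with hψ
  have hψinj : Function.Injective ψ := by
    rw [injective_iff_map_eq_zero]
    rintro ⟨a, b⟩ h
    simp only [hψ, AddMonoidHom.mk'_apply] at h
    have key : ((a * k + b * ℓ * ε : ℤ) : ℂ) * ζ +
        Complex.I * (((b * ℓ : ℤ) : ℂ) * ξ) = 0 := by
      rw [hν] at h
      field_simp at h
      push_cast
      linear_combination h
    obtain ⟨h1, h2⟩ := hinj _ _ key
    have hb : b = 0 := by
      have hlz : (ℓ : ℤ) ≠ 0 := by exact_mod_cast hl.ne'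
      exact (mul_eq_zero.mp h2).resolve_right hlz
    have ha : a = 0 := by
      have hkz : (k : ℤ) ≠ 0 := by exact_mod_cast hk.ne'
      have := h1
      rw [hb] at this
      simpa [hkz, hk.ne'] using this
    simp [ha, hb, Prod.ext_iff]
  have hrange : ψ.range = AddSubgroup.closure {(ζ : ℂ), (ℓ : ℂ) * ν} := by
    ext z
    rw [memLt, AddMonoidHom.mem_range]
    constructor
    · rintro ⟨⟨a, b⟩, rfl⟩; exact ⟨a, b, rfl⟩
    · rintro ⟨a, b, rfl⟩; exact ⟨(a, b), rfl⟩
  set Lt := AddSubgroup.closure {(ζ : ℂ), (ℓ : ℂ) * ν} with hLt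
  obtain ⟨e, he⟩ : ∃ e : (ℤ × ℤ) ≃+ Lt, ∀ p, ((e p : Lt) : ℂ) = ψ p := by
    refine ⟨(AddMonoidHom.ofInjective hψinj).trans (AddEquiv.addSubgroupCongr hrange),
      fun p => ?_⟩
    rw [AddEquiv.trans_apply, AddEquiv.addSubgroupCongr_apply,
      AddMonoidHom.ofInjective_apply]
  have he' : ∀ x : Lt, (x : ℂ) = ψ (e.symm x) := by
    intro x
    rw [← he (e.symm x), e.apply_symm_apply]
  constructor
  · constructor
    · exact ⟨hl'0, hμmemLt⟩
    · rintro j ⟨hj0, hjmem⟩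
      exact Nat.le_of_dvd hj0 (hlb j hjmem)
  · rintro L' rfl
    set L' := AddSubgroup.closure {(ζ : ℂ), ((l' : ℕ) : ℂ) * (Complex.I * ξ)} with hL'
    have hle : L' ≤ Lt := by
      rw [hL']
      apply AddSubgroup.closure_le Lt |>.mpr
      rintro z (rfl | rfl)
      · exact AddSubgroup.subset_closure (Set.mem_insert _ _)
      · exact hμmemLt
    refine ⟨hle, ?_⟩
    -- the quotient map
    set φ : Lt →+ ZMod k' := ((Int.castAddHom (ZMod k')).comp
        ((AddMonoidHom.snd ℤ ℤ).comp e.symm.toAddMonoidHom)) with hφ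
    have hφsurj : Function.Surjective φ := by
      intro c
      obtain ⟨n, hn⟩ := ZMod.intCast_surjective (n := k') c
      exact ⟨e (0, n), by simp [hφ, hn]⟩
    have hker : φ.ker = L'.addSubgroupOf Lt := by
      ext x
      rw [AddMonoidHom.mem_ker, AddSubgroup.mem_addSubgroupOf]
      simp only [hφ, AddMonoidHom.comp_apply, AddMonoidHom.coe_snd,
        AddEquiv.coe_toAddMonoidHom, Int.coe_castAddHom,
        ZMod.intCast_zmod_eq_zero_iff_dvd]
      rw [hL', show (x : ℂ) = ψ (e.symm x) from he' x]
      exact (memL' (e.symm x).1 (e.symm x).2).symm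
    have equiv : (Lt ⧸ L'.addSubgroupOf Lt) ≃+ ZMod k' := by
      rw [← hker]
      exact QuotientAddGroup.quotientKerEquivOfSurjective φ hφsurj
    constructor
    · exact isAddCyclic_of_surjective equiv.symm equiv.symm.surjective
    · rw [Nat.card_congr equiv.toEquiv, Nat.card_zmod]
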